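/- Let A be a unital C*-algebra, 0 < ε < 1, and 0 < δ < 2⁻¹⁶ ε⁸. Suppose a ∈ A and p₁, p₂ ∈ A are projections with ‖a*a − p₁‖ ≤ δ and ‖aa* − p₂‖ ≤ δ. Then there exists a partial isometry v ∈ A with ‖a − v‖ < ε, v*v = p₁, and vv* = p₂. -/

import Mathlib

set_option maxHeartbeats 2000000

section Aux

variable {A : Type*} [CStarAlgebra A]

private lemma aux_norm_sq_proj {p : A} (hsa : IsSelfAdjoint p) (hip : IsIdempotentElem p) :
    ‖p‖ * ‖p‖ = ‖p‖ := by
  rw [← CStarRing.norm_star_mul_self (x := p), hsa.star_eq, hip.eq]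

private lemma aux_proj_norm_le_one {p : A} (hsa : IsSelfAdjoint p) (hip : IsIdempotentElem p) :
    ‖p‖ ≤ 1 := by
  have h := aux_norm_sq_proj hsa hip
  nlinarith [norm_nonneg p]

private lemma aux_proj_eq_zero {p : A} (hsa : IsSelfAdjoint p) (hip : IsIdempotentElem p)
    (hlt : ‖p‖ < 1) : p = 0 := by
  have h := aux_norm_sq_proj hsa hip
  have h0 : ‖p‖ = 0 := by nlinarith [norm_nonneg p]
  simpa using h0

end Aux

theorem stmt_6 {A : Type*} [CStarAlgebra A] {ε δ : ℝ} (hε0 : 0 < ε) (hε1 : ε < 1)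
    (hδ0 : 0 < δ) (hδ : δ < 2 ^ (-16 : ℤ) * ε ^ 8) (a p₁ p₂ : A)
    (hp₁ : IsSelfAdjoint p₁) (hp₁' : IsIdempotentElem p₁)
    (hp₂ : IsSelfAdjoint p₂) (hp₂' : IsIdempotentElem p₂)
    (h1 : ‖star a * a - p₁‖ ≤ δ) (h2 : ‖a * star a - p₂‖ ≤ δ) :
    ∃ v : A, ‖a - v‖ < ε ∧ star v * v = p₁ ∧ v * star v = p₂ := by
  rcases subsingleton_or_nontrivial A with hA | hA
  · exact ⟨a, by simpa using hε0, Subsingleton.elim _ _, Subsingleton.elim _ _⟩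
  -- numeric facts
  have h2pow : (2:ℝ) ^ (-16 : ℤ) = 1 / 65536 := by norm_num
  have hδ2 : δ < (1 / 65536) * ε ^ 8 := by rwa [h2pow] at hδ
  have hε8 : ε ^ 8 ≤ 1 := pow_le_one₀ hε0.le hε1.le
  have hδ' : δ < 1 / 65536 := by nlinarith
  have hε82 : ε ^ 8 ≤ ε ^ 2 := pow_le_pow_of_le_one hε0.le hε1.le (by norm_num)
  have hδδ : δ * δ ≤ δ := by nlinarith
  have h64 : 64 * δ ^ 2 ≤ δ := by nlinarith
  set s := Real.sqrt δ with hs_def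
  have hs0 : 0 ≤ s := Real.sqrt_nonneg δ
  have hs2 : s ^ 2 = δ := Real.sq_sqrt hδ0.le
  have hs256 : s < 1 / 256 := by nlinarith
  -- basic norms
  have hnp₁ : ‖p₁‖ ≤ 1 := aux_proj_norm_le_one hp₁ hp₁'
  have hnp₂ : ‖p₂‖ ≤ 1 := aux_proj_norm_le_one hp₂ hp₂'
  have hsa1 : IsSelfAdjoint ((1 : A) - p₁) := (IsSelfAdjoint.one A).sub hp₁
  have hsa2 : IsSelfAdjoint ((1 : A) - p₂) := (IsSelfAdjoint.one A).sub hp₂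
  have hnq₁ : ‖(1 : A) - p₁‖ ≤ 1 := aux_proj_norm_le_one hsa1 hp₁'.one_sub
  have hnq₂ : ‖(1 : A) - p₂‖ ≤ 1 := aux_proj_norm_le_one hsa2 hp₂'.one_sub
  have hna2 : ‖a‖ * ‖a‖ ≤ 1 + δ := by
    rw [← CStarRing.norm_star_mul_self]
    have h := norm_add_le (star a * a - p₁) p₁
    rw [sub_add_cancel] at h
    linarith
  have hna : ‖a‖ ≤ 3 / 2 := by nlinarith [norm_nonneg a]
  -- helper products
  have P1 : ∀ z : A, p₁ * (p₁ * z) = p₁ * z := fun z => by rw [← mul_assoc, hp₁'.eq]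
  have P2 : ∀ z : A, p₂ * (p₂ * z) = p₂ * z := fun z => by rw [← mul_assoc, hp₂'.eq]
  -- the elements
  set x : A := p₂ * (a * p₁) with hx_def
  have hsx : star x = p₁ * (star a * p₂) := by
    simp [hx_def, star_mul, hp₁.star_eq, hp₂.star_eq, mul_assoc]
  set b : A := star x * x with hb_def
  have hb_sa : IsSelfAdjoint b := IsSelfAdjoint.star_mul_self x
  have hb_eq : b = p₁ * (star a * (p₂ * (a * p₁))) := by
    rw [hb_def, hsx, hx_def]
    simp only [mul_assoc, P2]
  have hbl : p₁ * b = b := by rw [hb_eq, P1]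
  have hbr : b * p₁ = b := by
    conv_lhs => rw [hb_eq]
    rw [hb_eq]
    simp only [mul_assoc, hp₁'.eq]
  set c : A := star a * a with hc_def
  have hcc : ‖c * c - c‖ ≤ 4 * δ := by
    have hkey : c * c - c
        = (c - p₁) * (c - p₁) + ((c - p₁) * p₁ + (p₁ * (c - p₁) + (p₁ - c))) := by
      simp only [mul_sub, sub_mul, hp₁'.eq]
      abel
    have n1 : ‖(c - p₁) * (c - p₁)‖ ≤ δ * δ := by
      have := norm_mul_le (c - p₁) (c - p₁)
      nlinarith [norm_nonneg (c - p₁)]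
    have n2 : ‖(c - p₁) * p₁‖ ≤ δ := by
      have := norm_mul_le (c - p₁) p₁
      nlinarith [norm_nonneg (c - p₁), norm_nonneg p₁]
    have n3 : ‖p₁ * (c - p₁)‖ ≤ δ := by
      have := norm_mul_le p₁ (c - p₁)
      nlinarith [norm_nonneg (c - p₁), norm_nonneg p₁]
    have n4 : ‖p₁ - c‖ ≤ δ := by rw [norm_sub_rev]; exact h1
    rw [hkey]
    have N1 := norm_add_le ((c - p₁) * (c - p₁)) ((c - p₁) * p₁ + (p₁ * (c - p₁) + (p₁ - c)))
    have N2 := norm_add_le ((c - p₁) * p₁) (p₁ * (c - p₁) + (p₁ - c))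
    have N3 := norm_add_le (p₁ * (c - p₁)) (p₁ - c)
    linarith
  have hd : ‖star a * (p₂ * a) - c‖ ≤ 7 * δ := by
    have e : star a * (p₂ * a) - c = star a * ((p₂ - a * star a) * a) + (c * c - c) := by
      simp only [hc_def, mul_sub, sub_mul, mul_assoc]
      abel
    have n1 : ‖star a * ((p₂ - a * star a) * a)‖ ≤ 3 * δ := by
      have t1 := norm_mul_le (star a) ((p₂ - a * star a) * a)
      have t2 := norm_mul_le (p₂ - a * star a) a
      have t3 : ‖p₂ - a * star a‖ ≤ δ := by rw [norm_sub_rev]; exact h2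
      have t4 : ‖star a‖ = ‖a‖ := norm_star a
      nlinarith [norm_nonneg a, norm_nonneg (p₂ - a * star a), norm_nonneg ((p₂ - a * star a) * a)]
    rw [e]
    have := norm_add_le (star a * ((p₂ - a * star a) * a)) (c * c - c)
    linarith
  have hbp1 : ‖b - p₁‖ ≤ 8 * δ := by
    have e : b - p₁ = p₁ * ((star a * (p₂ * a) - c) * p₁) + p₁ * ((c - p₁) * p₁) := by
      rw [hb_eq, hc_def]
      simp only [mul_sub, sub_mul, mul_assoc, hp₁'.eq]
      abel
    have n1 : ‖p₁ * ((star a * (p₂ * a) - c) * p₁)‖ ≤ 7 * δ := by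
      have t1 := norm_mul_le p₁ ((star a * (p₂ * a) - c) * p₁)
      have t2 := norm_mul_le (star a * (p₂ * a) - c) p₁
      nlinarith [norm_nonneg (star a * (p₂ * a) - c), norm_nonneg p₁,
        norm_nonneg ((star a * (p₂ * a) - c) * p₁)]
    have n2 : ‖p₁ * ((c - p₁) * p₁)‖ ≤ δ := by
      have t1 := norm_mul_le p₁ ((c - p₁) * p₁)
      have t2 := norm_mul_le (c - p₁) p₁
      nlinarith [norm_nonneg (c - p₁), norm_nonneg p₁, norm_nonneg ((c - p₁) * p₁)]
    rw [e]
    have := norm_add_le (p₁ * ((star a * (p₂ * a) - c) * p₁)) (p₁ * ((c - p₁) * p₁))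
    linarith
  have hbb : ‖b * b - b‖ ≤ 9 * δ := by
    have e : b * b - b = (b - p₁) * (b - p₁) + (b - p₁) := by
      simp only [mul_sub, sub_mul, hbl, hbr, hp₁'.eq]
      abel
    have n1 : ‖(b - p₁) * (b - p₁)‖ ≤ 64 * δ ^ 2 := by
      have := norm_mul_le (b - p₁) (b - p₁)
      nlinarith [norm_nonneg (b - p₁)]
    rw [e]
    have := norm_add_le ((b - p₁) * (b - p₁)) (b - p₁)
    linarith
  -- spectrum of b
  have hcfc_poly : cfc (fun t : ℝ => t ^ 2 - t) b = b * b - b := by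
    rw [cfc_sub (fun t : ℝ => t ^ 2) (fun t : ℝ => t) b
      (by fun_prop) (by fun_prop), cfc_pow_id b 2 hb_sa, cfc_id' ℝ b hb_sa, sq]
  have hspec : ∀ t ∈ spectrum ℝ b,
      (0 ≤ t ∧ t ≤ 14 * δ ∧ t ≤ 1 / 4) ∨ (1 / 2 ≤ t ∧ 1 - 14 * δ ≤ t ∧ t ≤ 1 + 14 * δ) := by
    intro t ht
    have ht' := ht
    rw [hb_def] at ht'
    have h0 : 0 ≤ t := spectrum_star_mul_self_nonneg t ht'
    have hmem : t ^ 2 - t ∈ spectrum ℝ (b * b - b) := by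
      rw [← hcfc_poly, cfc_map_spectrum (f := fun t : ℝ => t ^ 2 - t) (a := b) hb_sa
        (by fun_prop)]
      exact ⟨t, ht, rfl⟩
    have habs : |t ^ 2 - t| ≤ 9 * δ := by
      have := spectrum.norm_le_norm_of_mem hmem
      rw [Real.norm_eq_abs] at this
      linarith
    obtain ⟨hab1, hab2⟩ := abs_le.mp habs
    rcases le_or_gt t (1 / 4) with hc | hc
    · left
      refine ⟨h0, ?_, hc⟩
      nlinarith
    · right
      rcases le_or_gt t (3 / 4) with hc2 | hc2
      · exfalso
        nlinarith [mul_nonneg (by linarith : (0:ℝ) ≤ t - 1/4) (by linarith : (0:ℝ) ≤ 3/4 - t)]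
      · have hup : t ≤ 1 + 14 * δ := by
          by_contra hlt
          push_neg at hlt
          nlinarith [sq_nonneg (t - 1)]
        have hlo : 1 - 14 * δ ≤ t := by
          by_contra hlt
          push_neg at hlt
          nlinarith [mul_nonneg (by linarith : (0:ℝ) ≤ t - 3/4)
              (by linarith : (0:ℝ) ≤ 1 - 14 * δ - t),
            mul_pos hδ0 (by linarith : (0:ℝ) < t - 3/4)]
        exact ⟨by nlinarith, hlo, hup⟩
  -- the function g
  obtain ⟨g, hgc, hg_low, hg_high⟩ : ∃ g : ℝ → ℝ, Continuous g ∧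
      (∀ t : ℝ, t ≤ 1 / 4 → g t = 0) ∧ (∀ t : ℝ, 1 / 2 ≤ t → g t = (Real.sqrt t)⁻¹) := by
    refine ⟨fun t => min (max (4 * t - 1) 0) 1 * (Real.sqrt (max t 2⁻¹))⁻¹, ?_, ?_, ?_⟩
    · apply Continuous.mul
      · exact (((continuous_const.mul continuous_id).sub continuous_const).max
          continuous_const).min continuous_const
      · refine Continuous.inv₀ (Real.continuous_sqrt.comp (continuous_id.max continuous_const))
          fun t => ?_
        have hpos : (0:ℝ) < max t 2⁻¹ := lt_of_lt_of_le (by norm_num) (le_max_right _ _)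
        exact (Real.sqrt_pos.mpr hpos).ne'
    · intro t hle
      have hm : max (4 * t - 1) 0 = 0 := max_eq_right (by linarith)
      simp [hm]
    · intro t hge
      have hm1 : (1:ℝ) ≤ max (4 * t - 1) 0 := le_max_of_le_left (by linarith)
      have hm2 : max t 2⁻¹ = t := max_eq_left (by norm_num; linarith)
      simp only [min_eq_right hm1, hm2, one_mul]
  have hgcOn : ContinuousOn g (spectrum ℝ b) := hgc.continuousOn
  -- pointwise values on the high part
  have hval_high : ∀ t : ℝ, 1 / 2 ≤ t → g t * (t * g t) = 1 := by
    intro t hge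
    have h0 : (0:ℝ) ≤ t := by linarith
    have hw : Real.sqrt t ^ 2 = t := Real.sq_sqrt h0
    have hw0 : Real.sqrt t ≠ 0 := by
      refine (Real.sqrt_pos.mpr (by linarith)).ne'
    rw [hg_high t hge, ← hw]
    field_simp
    rw [Real.sqrt_sq (Real.sqrt_nonneg t)]
  -- v and q
  set v : A := x * cfc g b with hv_def
  have hGsa : IsSelfAdjoint (cfc g b) := cfc_predicate g b
  have hsv : star v = cfc g b * star x := by rw [hv_def, star_mul, hGsa.star_eq]
  have sandwich : ∀ u : ℝ → ℝ, Continuous u →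
      cfc u b * star x * (x * cfc u b) = cfc (fun t => u t * (t * u t)) b := by
    intro u hu
    have e2 : cfc (fun t : ℝ => t * u t) b = b * cfc u b := by
      rw [cfc_mul (fun t : ℝ => t) u b (by fun_prop) hu.continuousOn, cfc_id' ℝ b hb_sa]
    rw [cfc_mul u (fun t => t * u t) b hu.continuousOn (by fun_prop), e2, hb_def]
    simp [mul_assoc]
  set q : A := cfc (fun t => g t * (t * g t)) b with hq_def
  have hq_sa : IsSelfAdjoint q := cfc_predicate _ b
  have hvvq : star v * v = q := by
    rw [hsv, hv_def, hq_def]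
    exact sandwich g hgc
  have hfc : Continuous (fun t => g t * (t * g t)) := by fun_prop
  have hqq : q * q = q := by
    rw [hq_def, ← cfc_mul _ _ b hfc.continuousOn hfc.continuousOn]
    apply cfc_congr
    intro t ht
    rcases hspec t ht with ⟨h0, hle, hle4⟩ | ⟨hge, hge1, hle1⟩
    · simp [hg_low t hle4]
    · simp only [hval_high t hge]
      norm_num
  have hgg_c : Continuous (fun t : ℝ => g t * g t) := by fun_prop
  have hql : p₁ * q = q := by
    have e : q = b * cfc (fun t : ℝ => g t * g t) b := by
      rw [hq_def,
        show (fun t : ℝ => g t * (t * g t)) = fun t : ℝ => t * (g t * g t) from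
          funext fun t => by ring,
        cfc_mul (fun t : ℝ => t) (fun t : ℝ => g t * g t) b (by fun_prop) hgg_c.continuousOn,
        cfc_id' ℝ b hb_sa]
    rw [e, ← mul_assoc, hbl]
  have hqr : q * p₁ = q := by
    have e : q = cfc (fun t : ℝ => g t * g t) b * b := by
      rw [hq_def,
        show (fun t : ℝ => g t * (t * g t)) = fun t : ℝ => (g t * g t) * t from
          funext fun t => by ring,
        cfc_mul (fun t : ℝ => g t * g t) (fun t : ℝ => t) b hgg_c.continuousOn (by fun_prop),
        cfc_id' ℝ b hb_sa]
    rw [e, mul_assoc, hbr]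
  have hqb : ‖q - b‖ ≤ 14 * δ := by
    have e : q - b = cfc (fun t : ℝ => g t * (t * g t) - t) b := by
      rw [hq_def, cfc_sub _ (fun t : ℝ => t) b hfc.continuousOn (by fun_prop),
        cfc_id' ℝ b hb_sa]
    rw [e]
    apply norm_cfc_le (by positivity)
    intro t ht
    rw [Real.norm_eq_abs, abs_le]
    rcases hspec t ht with ⟨h0, hle, hle4⟩ | ⟨hge, hge1, hle1⟩
    · simp only [hg_low t hle4, zero_mul, mul_zero, zero_sub]
      constructor <;> linarith
    · rw [hval_high t hge]
      constructor <;> linarith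
  have hq_p₁ : q = p₁ := by
    have hsa : IsSelfAdjoint (p₁ - q) := hp₁.sub hq_sa
    have hip : IsIdempotentElem (p₁ - q) := by
      show (p₁ - q) * (p₁ - q) = p₁ - q
      simp only [mul_sub, sub_mul, hp₁'.eq, hql, hqr, hqq]
      abel
    have hn : ‖p₁ - q‖ < 1 := by
      have e : p₁ - q = (p₁ - b) + (b - q) := by abel
      rw [e]
      have hN := norm_add_le (p₁ - b) (b - q)
      rw [norm_sub_rev p₁ b, norm_sub_rev b q] at hN
      linarith only [hN, hbp1, hqb, hδ', hδ0]
    have h0 := aux_proj_eq_zero hsa hip hn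
    have := sub_eq_zero.mp h0
    exact this.symm
  have hvv : star v * v = p₁ := by rw [hvvq, hq_p₁]
  -- r := v * star v
  have hvp : v * p₁ = v := by
    have hz : v * (1 - p₁) = 0 := by
      have hstar : star (v * (1 - p₁)) * (v * (1 - p₁)) = 0 := by
        rw [star_mul, hsa1.star_eq]
        have e : (1 - p₁) * star v * (v * (1 - p₁)) = (1 - p₁) * (p₁ * (1 - p₁)) := by
          rw [mul_assoc, ← mul_assoc (star v), hvv]
        rw [e]
        have e2 : p₁ * (1 - p₁) = 0 := by
          simp [mul_sub, hp₁'.eq]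
        rw [e2, mul_zero]
      have hnz : ‖v * (1 - p₁)‖ * ‖v * (1 - p₁)‖ = 0 := by
        rw [← CStarRing.norm_star_mul_self, hstar, norm_zero]
      have : ‖v * (1 - p₁)‖ = 0 := by nlinarith [norm_nonneg (v * (1 - p₁))]
      exact norm_eq_zero.mp this
    rw [mul_sub, mul_one, sub_eq_zero] at hz
    exact hz.symm
  have hpv : p₁ * star v = star v := by
    calc p₁ * star v = star (v * p₁) := by simp [star_mul, hp₁.star_eq]
    _ = star v := by rw [hvp]
  set r : A := v * star v with hr_def
  have hr_sa : IsSelfAdjoint r := IsSelfAdjoint.mul_star_self v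
  have hrr : r * r = r := by
    calc v * star v * (v * star v) = v * ((star v * v) * star v) := by simp [mul_assoc]
    _ = v * (p₁ * star v) := by rw [hvv]
    _ = v * star v := by rw [hpv]
  have hp2x : p₂ * x = x := by rw [hx_def]; exact P2 _
  have hp2v : p₂ * v = v := by rw [hv_def, ← mul_assoc, hp2x]
  have hvp2 : star v * p₂ = star v := by
    calc star v * p₂ = star (p₂ * v) := by simp [star_mul, hp₂.star_eq]
    _ = star v := by rw [hp2v]
  have hp2r : p₂ * r = r := by rw [hr_def, ← mul_assoc, hp2v]
  have hrp2 : r * p₂ = r := by rw [hr_def, mul_assoc, hvp2]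
  -- norm estimates
  have ha1 : ‖(1 - p₂) * a‖ ≤ s := by
    have hsq : ‖(1 - p₂) * a‖ * ‖(1 - p₂) * a‖ ≤ δ := by
      rw [← CStarRing.norm_self_mul_star]
      have e : ((1 - p₂) * a) * star ((1 - p₂) * a)
          = (1 - p₂) * ((a * star a - p₂) * (1 - p₂)) := by
        rw [star_mul, hsa2.star_eq]
        simp only [mul_sub, sub_mul, mul_one, one_mul, hp₂'.eq, mul_assoc]
        abel
      rw [e]
      have t1 := norm_mul_le (1 - p₂ : A) ((a * star a - p₂) * (1 - p₂))
      have t2 := norm_mul_le (a * star a - p₂) (1 - p₂ : A)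
      nlinarith only [t1, t2, h2, hnq₂, hδ0, norm_nonneg (a * star a - p₂),
        norm_nonneg ((a * star a - p₂) * (1 - p₂ : A)), norm_nonneg (1 - p₂ : A)]
    nlinarith only [hsq, hs2, hs0, norm_nonneg ((1 - p₂) * a)]
  have ha2 : ‖a * (1 - p₁)‖ ≤ s := by
    have hsq : ‖a * (1 - p₁)‖ * ‖a * (1 - p₁)‖ ≤ δ := by
      rw [← CStarRing.norm_star_mul_self]
      have e : star (a * (1 - p₁)) * (a * (1 - p₁))
          = (1 - p₁) * ((star a * a - p₁) * (1 - p₁)) := by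
        rw [star_mul, hsa1.star_eq]
        simp only [mul_sub, sub_mul, mul_one, one_mul, hp₁'.eq, mul_assoc]
        abel
      rw [e]
      have t1 := norm_mul_le (1 - p₁ : A) ((star a * a - p₁) * (1 - p₁))
      have t2 := norm_mul_le (star a * a - p₁) (1 - p₁ : A)
      nlinarith only [t1, t2, h1, hnq₁, hδ0, norm_nonneg (star a * a - p₁),
        norm_nonneg ((star a * a - p₁) * (1 - p₁ : A)), norm_nonneg (1 - p₁ : A)]
    nlinarith only [hsq, hs2, hs0, norm_nonneg (a * (1 - p₁))]
  have hax : ‖a - x‖ ≤ 2 * s := by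
    have e : a - x = (1 - p₂) * a + p₂ * (a * (1 - p₁)) := by
      rw [hx_def]
      simp only [mul_sub, sub_mul, one_mul, mul_one]
      abel
    rw [e]
    have hN := norm_add_le ((1 - p₂) * a) (p₂ * (a * (1 - p₁)))
    have t1 := norm_mul_le p₂ (a * (1 - p₁))
    nlinarith only [hN, t1, ha1, ha2, hnp₂, hs0, norm_nonneg (a * (1 - p₁)), norm_nonneg p₂]
  have hvx : ‖v - x‖ * ‖v - x‖ ≤ 14 * δ := by
    have humc : Continuous (fun t : ℝ => g t - 1) := by fun_prop
    have e0 : v - x = x * cfc (fun t : ℝ => g t - 1) b := by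
      rw [cfc_sub g (fun _ : ℝ => 1) b hgcOn (by fun_prop), cfc_const_one ℝ b hb_sa,
        mul_sub, mul_one, hv_def]
    have e1 : star (v - x) * (v - x) = cfc (fun t : ℝ => (g t - 1) * (t * (g t - 1))) b := by
      rw [e0, star_mul, (cfc_predicate (fun t : ℝ => g t - 1) b : IsSelfAdjoint _).star_eq,
        ← sandwich _ humc]
    rw [← CStarRing.norm_star_mul_self, e1]
    apply norm_cfc_le (by positivity)
    intro t ht
    rw [Real.norm_eq_abs]
    rcases hspec t ht with ⟨h0, hle, hle4⟩ | ⟨hge, hge1, hle1⟩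
    · rw [hg_low t hle4, abs_le]
      constructor <;> linarith only [hle, h0, hδ0]
    · have h0 : (0:ℝ) ≤ t := by linarith
      set w := Real.sqrt t with hw_def
      have hw : w ^ 2 = t := Real.sq_sqrt h0
      have hw0 : (0:ℝ) < w := Real.sqrt_pos.mpr (by linarith)
      have eval : (g t - 1) * (t * (g t - 1)) = (1 - w) ^ 2 := by
        rw [hg_high t hge, ← hw]
        field_simp
        rw [Real.sqrt_sq hw0.le]
      rw [eval, abs_of_nonneg (sq_nonneg _)]
      have hB : (1 - w) ^ 2 * (1 + w) ^ 2 ≤ 196 * δ ^ 2 := by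
        have heq : ((1 - w) * (1 + w)) ^ 2 = (1 - t) ^ 2 := by rw [← hw]; ring
        nlinarith only [heq, sq_nonneg ((1 - w) * (1 + w)), hge1, hle1, hδ0]
      have h196 : 196 * δ ^ 2 ≤ 14 * δ := by nlinarith only [hδ0, hδ']
      have hX : (0:ℝ) ≤ (1 - w) ^ 2 * (2 * w + w ^ 2) :=
        mul_nonneg (sq_nonneg _) (by positivity)
      nlinarith only [hB, h196, hX, sq_nonneg (1 - w)]
  have hvx' : ‖v - x‖ ≤ 4 * s := by
    nlinarith only [hvx, hs2, hs0, norm_nonneg (v - x)]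
  have hav : ‖a - v‖ ≤ 6 * s := by
    have e : a - v = (a - x) - (v - x) := by abel
    rw [e]
    have := norm_sub_le (a - x) (v - x)
    linarith
  have hav_eps : ‖a - v‖ < ε := by
    have h36 : 36 * δ < ε ^ 2 := by
      nlinarith only [hδ2, hε82, hε8, hδ0, hε0]
    nlinarith only [hav, h36, hs2, hs0, hε0, norm_nonneg (a - v)]
  -- r = p₂
  have hva : ‖v‖ ≤ 2 := by
    have e : v = a - (a - v) := by abel
    rw [e]
    have := norm_sub_le a (a - v)
    linarith
  have hrp : ‖p₂ - r‖ < 1 := by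
    have e : p₂ - r = (p₂ - a * star a) + (a * (star a - star v) + (a - v) * star v) := by
      rw [hr_def]
      simp only [mul_sub, sub_mul]
      abel
    rw [e]
    have hN1 := norm_add_le (p₂ - a * star a) (a * (star a - star v) + (a - v) * star v)
    have hN2 := norm_add_le (a * (star a - star v)) ((a - v) * star v)
    have t1' : ‖a * (star a - star v)‖ ≤ ‖a‖ * ‖a - v‖ :=
      calc ‖a * (star a - star v)‖ ≤ ‖a‖ * ‖star a - star v‖ := norm_mul_le _ _
      _ = ‖a‖ * ‖a - v‖ := by rw [← star_sub, norm_star]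
    have t2' : ‖(a - v) * star v‖ ≤ ‖a - v‖ * ‖v‖ :=
      calc ‖(a - v) * star v‖ ≤ ‖a - v‖ * ‖star v‖ := norm_mul_le _ _
      _ = ‖a - v‖ * ‖v‖ := by rw [norm_star]
    have e3 : ‖p₂ - a * star a‖ ≤ δ := by rw [norm_sub_rev]; exact h2
    nlinarith only [hN1, hN2, t1', t2', e3, hav, hva, hna, hs256, hs0, hδ', hδ0,
      norm_nonneg (a - v), norm_nonneg a, norm_nonneg v,
      norm_nonneg (a * (star a - star v)), norm_nonneg ((a - v) * star v)]
  have hip2 : IsIdempotentElem (p₂ - r) := by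
    show (p₂ - r) * (p₂ - r) = p₂ - r
    simp only [mul_sub, sub_mul, hp₂'.eq, hp2r, hrp2, hrr]
    abel
  have hr_p₂ : v * star v = p₂ := by
    have h0 := aux_proj_eq_zero (hp₂.sub hr_sa) hip2 hrp
    have := sub_eq_zero.mp h0
    rw [← hr_def]
    exact this.symm
  exact ⟨v, hav_eps, hvv, hr_p₂⟩
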